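/- Let A = ⊕_{i≤0} A_i be a commutative ℤ-graded unital ℂ-algebra generated by the finite-dimensional component A := A_{-1}, and let M = ⊕_{i≥−1} M_i be a ℤ-graded A-module with dim M_i < ∞ for all i. Assume M is transitive, i.e., for every i ≥ 0 and every nonzero m ∈ M_i one has A·m ≠ 0 (where A = A_{-1}). If M is infinite-dimensional, then there exists a nonzero element m ∈ M_0 such that the kernel of the map A → M, a ↦ a·m, has codimension 1 in A. -/

import Mathlib

open Module LinearMap

universe u v

/-- Common eigenvector for a finite commuting family of endomorphisms of a nonzero
finite-dimensional complex vector space. -/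
lemma commEig (k : ℕ) : ∀ (V : Type v) [AddCommGroup V] [Module ℂ V] [FiniteDimensional ℂ V],
    (∃ x : V, x ≠ 0) → ∀ (T : Fin k → Module.End ℂ V),
    (∀ i j x, T i (T j x) = T j (T i x)) →
    ∃ v : V, v ≠ 0 ∧ ∀ i, ∃ μ : ℂ, T i v = μ • v := by
  induction k with
  | zero =>
    intro V _ _ _ hx T _
    obtain ⟨x, hx⟩ := hx
    exact ⟨x, hx, fun i => i.elim0⟩
  | succ k ih =>
    intro V _ _ _ hx T hT
    obtain ⟨x, hx0⟩ := hx
    have : Nontrivial V := ⟨⟨x, 0, hx0⟩⟩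
    obtain ⟨μ, hμ⟩ := Module.End.exists_eigenvalue (T (Fin.last k))
    set E := (T (Fin.last k)).eigenspace μ with hE
    have hEinv : ∀ (i : Fin k), ∀ y ∈ E, T i.castSucc y ∈ E := by
      intro i y hy
      rw [hE, Module.End.mem_eigenspace_iff] at hy ⊢
      rw [hT (Fin.last k) i.castSucc y, hy, map_smul]
    set T' : Fin k → Module.End ℂ ↥E := fun i => (T i.castSucc).restrict (hEinv i) with hT'
    have hT'comm : ∀ i j x, T' i (T' j x) = T' j (T' i x) := by
      intro i j y
      apply Subtype.ext
      simp only [hT', LinearMap.restrict_apply]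
      exact hT i.castSucc j.castSucc y
    obtain ⟨w, hw⟩ := hμ.exists_hasEigenvector
    have hEex : ∃ z : ↥E, z ≠ 0 := by
      refine ⟨⟨w, hw.1⟩, ?_⟩
      intro h
      exact hw.2 ((Submodule.mk_eq_zero _ _).mp h)
    obtain ⟨v, hv0, hv⟩ := ih ↥E hEex T' hT'comm
    refine ⟨(v : V), ?_, ?_⟩
    · intro h
      exact hv0 (Subtype.ext h)
    · intro i
      induction i using Fin.lastCases with
      | last =>
        exact ⟨μ, Module.End.mem_eigenspace_iff.mp v.2⟩
      | cast i =>
        obtain ⟨ν, hν⟩ := hv i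
        refine ⟨ν, ?_⟩
        have := congrArg (Subtype.val) hν
        simpa [hT', LinearMap.restrict_apply] using this

/-- Main lemma: without any transitivity assumption, in some degree there is a nonzero
vector whose kernel has codimension at most 1. Proof by induction on the dimension of `A`. -/
lemma mainAux (d : ℕ) : ∀ (A : Type u) [AddCommGroup A] [Module ℂ A] [FiniteDimensional ℂ A],
    finrank ℂ A ≤ d →
    ∀ (M : ℕ → Type v) [∀ n, AddCommGroup (M n)] [∀ n, Module ℂ (M n)]
      [∀ n, FiniteDimensional ℂ (M n)]
      (act : ∀ n, A →ₗ[ℂ] (M (n + 1) →ₗ[ℂ] M n)),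
      (∀ n (a b : A) (m : M (n + 2)), act n a (act (n + 1) b m) = act n b (act (n + 1) a m)) →
      (∀ N : ℕ, ∃ n, N ≤ n ∧ ∃ m : M n, m ≠ 0) →
      ∃ n, ∃ v : M (n + 1), v ≠ 0 ∧
        finrank ℂ A ≤ finrank ℂ (LinearMap.ker ((act n).flip v)) + 1 := by
  induction d with
  | zero =>
    intro A _ _ _ hd M _ _ _ act comm hne
    obtain ⟨n, hn, m, hm⟩ := hne 1
    obtain ⟨kk, rfl⟩ : ∃ kk, n = kk + 1 := ⟨n - 1, by omega⟩
    exact ⟨kk, m, hm, by omega⟩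
  | succ d ih =>
    intro A _ _ _ hd M _ _ _ act comm hne
    by_cases hA : finrank ℂ A = 0
    · obtain ⟨n, hn, m, hm⟩ := hne 1
      obtain ⟨kk, rfl⟩ : ∃ kk, n = kk + 1 := ⟨n - 1, by omega⟩
      exact ⟨kk, m, hm, by omega⟩
    have : Nontrivial A := Module.finrank_pos_iff.mp (Nat.pos_of_ne_zero hA)
    obtain ⟨a, ha⟩ := exists_ne (0 : A)
    set K : ∀ n, Submodule ℂ (M (n + 1)) := fun n => LinearMap.ker ((act n) a) with hK
    by_cases h1 : ∀ N, ∃ n, N ≤ n ∧ K n ≠ ⊥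
    · -- Case 1: kernels of a are nonzero in arbitrarily high degrees: recurse
      obtain ⟨B, hB⟩ := Submodule.exists_isCompl (Submodule.span ℂ {a})
      have hspan1 : finrank ℂ (Submodule.span ℂ {a}) = 1 := finrank_span_singleton ha
      have hcompl := Submodule.finrank_add_eq_of_isCompl hB
      have hBd : finrank ℂ ↥B ≤ d := by omega
      have hmem : ∀ (n : ℕ) (b : A), ∀ x ∈ K (n + 1), (act (n + 1)) b x ∈ K n := by
        intro n b x hx
        simp only [hK, LinearMap.mem_ker] at hx ⊢
        rw [comm n a b x, hx, map_zero]
      set act' : ∀ n, ↥B →ₗ[ℂ] (↥(K (n + 1)) →ₗ[ℂ] ↥(K n)) := fun n =>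
        { toFun := fun b => ((act (n + 1)) (b : A)).restrict (hmem n (b : A))
          map_add' := by
            intro b c
            refine LinearMap.ext fun x => Subtype.ext ?_
            simp [LinearMap.restrict_apply]
          map_smul' := by
            intro c b
            refine LinearMap.ext fun x => Subtype.ext ?_
            simp [LinearMap.restrict_apply] } with hact'
      have comm' : ∀ n (b c : ↥B) (m : ↥(K (n + 2))),
          act' n b (act' (n + 1) c m) = act' n c (act' (n + 1) b m) := by
        intro n b c m
        apply Subtype.ext
        simp only [hact', LinearMap.coe_mk, AddHom.coe_mk, LinearMap.restrict_apply]
        exact comm (n + 1) (b : A) (c : A) (m : M (n + 3))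
      have hne' : ∀ N : ℕ, ∃ n, N ≤ n ∧ ∃ m : ↥(K n), m ≠ 0 := by
        intro N
        obtain ⟨n, hn, hKn⟩ := h1 N
        obtain ⟨x, hxK, hx0⟩ := (Submodule.ne_bot_iff _).mp hKn
        exact ⟨n, hn, ⟨x, hxK⟩, fun h => hx0 ((Submodule.mk_eq_zero _ _).mp h)⟩
      obtain ⟨n, v, hv0, hrk⟩ := ih ↥B hBd (fun n => ↥(K n)) act' comm' hne'
      refine ⟨n + 1, (v : M (n + 2)), ?_, ?_⟩
      · intro h
        exact hv0 (Subtype.ext h)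
      · set kA := LinearMap.ker ((act (n + 1)).flip (v : M (n + 2))) with hkA
        set kB := LinearMap.ker ((act' n).flip v) with hkB
        have hsub : Submodule.span ℂ {a} ⊔ Submodule.map B.subtype kB ≤ kA := by
          apply sup_le
          · rw [Submodule.span_le, Set.singleton_subset_iff]
            have := v.2
            simp only [hK, LinearMap.mem_ker] at this
            simp only [hkA, SetLike.mem_coe, LinearMap.mem_ker, LinearMap.flip_apply]
            exact this
          · rintro _ ⟨b, hb, rfl⟩
            simp only [hkB, LinearMap.mem_ker, LinearMap.flip_apply] at hb
            simp only [hkA, LinearMap.mem_ker, LinearMap.flip_apply]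
            have := congrArg Subtype.val hb
            simpa [hact', LinearMap.restrict_apply] using this
        have hdisj : Disjoint (Submodule.span ℂ {a}) (Submodule.map B.subtype kB) :=
          hB.disjoint.mono_right (Submodule.map_subtype_le B kB)
        have hsup := Submodule.finrank_sup_add_finrank_inf_eq (Submodule.span ℂ {a})
          (Submodule.map B.subtype kB)
        rw [hdisj.eq_bot] at hsup
        rw [hspan1, Submodule.finrank_map_subtype_eq] at hsup
        simp only [finrank_bot] at hsup
        have hmono := Submodule.finrank_mono hsub
        omega
    · -- Case 2: a acts injectively in all high degrees
      push_neg at h1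
      obtain ⟨N, hN⟩ := h1
      have hinj : ∀ n, N ≤ n → Function.Injective ((act n) a) := by
        intro n hn
        exact LinearMap.ker_eq_bot.mp (hN n hn)
      have hmono : ∀ m n, N ≤ m → m ≤ n → finrank ℂ (M n) ≤ finrank ℂ (M m) := by
        intro m n hm hmn
        induction n, hmn using Nat.le_induction with
        | base => exact le_rfl
        | succ n hmn ihn =>
          exact le_trans (LinearMap.finrank_le_finrank_of_injective
            (hinj n (le_trans hm hmn))) ihn
      have hSne : Set.Nonempty {k | ∃ n, N ≤ n ∧ finrank ℂ (M n) = k} :=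
        ⟨finrank ℂ (M N), N, le_rfl, rfl⟩
      obtain ⟨n₀, hn₀N, hn₀⟩ := Nat.sInf_mem hSne
      have hconst : ∀ n, n₀ ≤ n → finrank ℂ (M n) = finrank ℂ (M n₀) := by
        intro n hn
        refine le_antisymm (hmono n₀ n hn₀N hn) ?_
        rw [hn₀]
        exact Nat.sInf_le ⟨n, le_trans hn₀N hn, rfl⟩
      have hpos : 0 < finrank ℂ (M n₀) := by
        obtain ⟨n, hn, m, hm⟩ := hne n₀
        rw [← hconst n hn]
        exact Module.finrank_pos_iff.mpr ⟨⟨m, 0, hm⟩⟩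
      have hbij : ∀ n, n₀ ≤ n → Function.Bijective ((act n) a) := by
        intro n hn
        have hi := hinj n (le_trans hn₀N hn)
        exact ⟨hi, (LinearMap.injective_iff_surjective_of_finrank_eq_finrank
          (by rw [hconst (n + 1) (by omega), hconst n hn])).mp hi⟩
      set e : M (n₀ + 1) ≃ₗ[ℂ] M n₀ := LinearEquiv.ofBijective _ (hbij n₀ le_rfl) with he
      have hsymm : ∀ z : M (n₀ + 1), e.symm ((act n₀) a z) = z := by
        intro z
        rw [show (act n₀) a z = e z from rfl, LinearEquiv.symm_apply_apply]
      set r : A → Module.End ℂ (M (n₀ + 1)) :=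
        fun b => (e.symm : M n₀ →ₗ[ℂ] M (n₀ + 1)).comp ((act n₀) b) with hr
      have hr_apply : ∀ b x, r b x = e.symm ((act n₀) b x) := fun _ _ => rfl
      have hrcomm : ∀ b c x, r b (r c x) = r c (r b x) := by
        intro b c x
        obtain ⟨u, hu⟩ := (hbij (n₀ + 1) (by omega)).2 x
        have h1' : ∀ q : A, e.symm ((act n₀) q x) = (act (n₀ + 1)) q u := by
          intro q
          rw [← hu, comm n₀ q a u]
          exact hsymm _
        calc r b (r c x) = e.symm ((act n₀) b ((act (n₀ + 1)) c u)) := by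
              rw [hr_apply, hr_apply, h1' c]
          _ = e.symm ((act n₀) c ((act (n₀ + 1)) b u)) := by rw [comm n₀ b c u]
          _ = r c (r b x) := by rw [hr_apply, hr_apply, h1' b]
      have hVex : ∃ x : M (n₀ + 1), x ≠ 0 := by
        have hp : 0 < finrank ℂ (M (n₀ + 1)) := by
          rw [hconst (n₀ + 1) (by omega)]; exact hpos
        have : Nontrivial (M (n₀ + 1)) := Module.finrank_pos_iff.mp hp
        exact exists_ne 0
      set bA := Module.finBasis ℂ A with hbA
      obtain ⟨v, hv0, hev⟩ := commEig (finrank ℂ A) (M (n₀ + 1)) hVex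
        (fun i => r (bA i)) (fun i j x => hrcomm _ _ x)
      refine ⟨n₀, v, hv0, ?_⟩
      have hav0 : (act n₀) a v ≠ 0 := by
        intro h
        apply hv0
        rw [← hsymm v, h, map_zero]
      set φ : A →ₗ[ℂ] M (n₀ + 1) :=
        (e.symm : M n₀ →ₗ[ℂ] M (n₀ + 1)).comp ((act n₀).flip v) with hφdef
      have hφ : ∀ b : A, φ b ∈ Submodule.span ℂ {v} := by
        suffices h : LinearMap.range φ ≤ Submodule.span ℂ {v} by
          intro b; exact h ⟨b, rfl⟩
        rw [LinearMap.range_eq_map, ← bA.span_eq, Submodule.map_span, Submodule.span_le]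
        rintro _ ⟨_, ⟨i, rfl⟩, rfl⟩
        obtain ⟨μ, hμ⟩ := hev i
        exact Submodule.mem_span_singleton.mpr ⟨μ, hμ.symm⟩
      have hrange : ∀ b : A, ((act n₀).flip v) b ∈ Submodule.span ℂ {(act n₀) a v} := by
        intro b
        obtain ⟨c, hc⟩ := Submodule.mem_span_singleton.mp (hφ b)
        refine Submodule.mem_span_singleton.mpr ⟨c, ?_⟩
        have h2 := congrArg (fun y => e y) hc
        simp only [map_smul] at h2
        have h3 : e (φ b) = (act n₀) b v := e.apply_symm_apply ((act n₀) b v)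
        rw [h3] at h2
        rw [show e v = (act n₀) a v from rfl] at h2
        simpa using h2
      have hrle : LinearMap.range ((act n₀).flip v) ≤ Submodule.span ℂ {(act n₀) a v} := by
        rintro _ ⟨b, rfl⟩
        exact hrange b
      have h1' : finrank ℂ (LinearMap.range ((act n₀).flip v)) ≤ 1 := by
        calc finrank ℂ (LinearMap.range ((act n₀).flip v))
            ≤ finrank ℂ (Submodule.span ℂ {(act n₀) a v}) := Submodule.finrank_mono hrle
          _ = 1 := finrank_span_singleton hav0
      have h2' := LinearMap.finrank_range_add_finrank_ker ((act n₀).flip v)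
      omega

theorem stmt1 (A : Type*) [AddCommGroup A] [Module ℂ A] [FiniteDimensional ℂ A]
    (M : ℕ → Type*) [∀ n, AddCommGroup (M n)] [∀ n, Module ℂ (M n)]
    [∀ n, FiniteDimensional ℂ (M n)]
    (act : ∀ n, A →ₗ[ℂ] (M (n + 1) →ₗ[ℂ] M n))
    (comm : ∀ n (a b : A) (m : M (n + 2)),
      act n a (act (n + 1) b m) = act n b (act (n + 1) a m))
    (htrans : ∀ n, ∀ m : M (n + 1), m ≠ 0 → ∃ a : A, act n a m ≠ 0)
    (hinf : ∀ N : ℕ, ∃ n, N ≤ n ∧ ∃ m : M n, m ≠ 0) :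
    ∃ m : M 1, m ≠ 0 ∧
      Module.finrank ℂ (LinearMap.ker ((act 0).flip m)) + 1 = Module.finrank ℂ A := by
  obtain ⟨n, v, hv0, hle⟩ := mainAux (finrank ℂ A) A le_rfl M act comm hinf
  have descend : ∀ n (v : M (n + 1)), v ≠ 0 →
      finrank ℂ A ≤ finrank ℂ (LinearMap.ker ((act n).flip v)) + 1 →
      ∃ m : M 1, m ≠ 0 ∧ finrank ℂ A ≤ finrank ℂ (LinearMap.ker ((act 0).flip m)) + 1 := by
    intro n
    induction n with
    | zero => intro v h1 h2; exact ⟨v, h1, h2⟩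
    | succ n ihn =>
      intro v hv0 hle
      obtain ⟨b, hb⟩ := htrans (n + 1) v hv0
      refine ihn ((act (n + 1)) b v) hb (le_trans hle ?_)
      have hker : LinearMap.ker ((act (n + 1)).flip v) ≤
          LinearMap.ker ((act n).flip ((act (n + 1)) b v)) := by
        intro h hh
        simp only [LinearMap.mem_ker, LinearMap.flip_apply] at hh ⊢
        rw [comm n h b v, hh, map_zero]
      exact Nat.add_le_add_right (Submodule.finrank_mono hker) 1
  obtain ⟨m, hm0, hm⟩ := descend n v hv0 hle
  refine ⟨m, hm0, ?_⟩
  have hne : LinearMap.ker ((act 0).flip m) ≠ ⊤ := by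
    obtain ⟨b, hb⟩ := htrans 0 m hm0
    intro h
    apply hb
    have hmem : b ∈ LinearMap.ker ((act 0).flip m) := h ▸ Submodule.mem_top
    simpa using hmem
  have hlt := Submodule.finrank_lt hne
  omega
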